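/- Let 0 < α < 1. The function W₀ satisfies: (1) W₀ is nonincreasing on [0,∞); (2) 0 < W₀(t) ≤ 1 for every t ≥ 0; and (3) W₀(t) → 0 as t → +∞. -/

import Mathlib

open MeasureTheory Real Set Filter

/-- The kernel `W₀(t) = (sin(απ)/π) ∫₀^∞ e^(-rt) r^(α-1)/(r^(2α)+2r^α cos(απ)+1) dr`. -/
noncomputable def W0 (α t : ℝ) : ℝ :=
  (Real.sin (α * Real.pi) / Real.pi) *
    ∫ r in Set.Ioi (0 : ℝ),
      Real.exp (-r * t) * r ^ (α - 1) /
        (r ^ (2 * α) + 2 * r ^ α * Real.cos (α * Real.pi) + 1)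

namespace W0Aux

/-- The denominator of the integrand. -/
noncomputable def Dd (α r : ℝ) : ℝ :=
  r ^ (2 * α) + 2 * r ^ α * Real.cos (α * Real.pi) + 1

lemma sin_pos (α : ℝ) (hα0 : 0 < α) (hα1 : α < 1) : 0 < Real.sin (α * Real.pi) :=
  Real.sin_pos_of_pos_of_lt_pi (by positivity) (by nlinarith [Real.pi_pos])

lemma abs_cos_lt (α : ℝ) (hα0 : 0 < α) (hα1 : α < 1) : |Real.cos (α * Real.pi)| < 1 := by
  have hs := sin_pos α hα0 hα1
  have := Real.sin_sq_add_cos_sq (α * Real.pi)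
  nlinarith [abs_nonneg (Real.cos (α * Real.pi)), sq_abs (Real.cos (α * Real.pi))]

lemma D_ge_sinsq (α : ℝ) {r : ℝ} (hr : 0 < r) :
    Real.sin (α * Real.pi) ^ 2 ≤ Dd α r := by
  have h2 : r ^ (2*α) = (r ^ α)^2 := by rw [two_mul, Real.rpow_add hr, sq]
  have := Real.sin_sq_add_cos_sq (α * Real.pi)
  unfold Dd; rw [h2]
  nlinarith [sq_nonneg (r ^ α + Real.cos (α * Real.pi))]

lemma D_pos (α : ℝ) (hα0 : 0 < α) (hα1 : α < 1) {r : ℝ} (hr : 0 < r) : 0 < Dd α r := by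
  have hs := sin_pos α hα0 hα1
  have := D_ge_sinsq α hr
  nlinarith

lemma D_ge' (α : ℝ) (hα0 : 0 < α) (hα1 : α < 1) {r : ℝ} (hr : 0 < r) :
    (1 - |Real.cos (α * Real.pi)|) * r ^ (2*α) ≤ Dd α r := by
  have hc := abs_cos_lt α hα0 hα1
  have h2 : r ^ (2*α) = (r ^ α)^2 := by rw [two_mul, Real.rpow_add hr, sq]
  have hu : (0:ℝ) ≤ r ^ α := Real.rpow_nonneg hr.le α
  unfold Dd; rw [h2]
  nlinarith [sq_nonneg (r ^ α - 1), sq_nonneg (r ^ α + 1), abs_nonneg (Real.cos (α * Real.pi)),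
    neg_abs_le (Real.cos (α * Real.pi)), le_abs_self (Real.cos (α * Real.pi))]

lemma contOn (α t : ℝ) (hα0 : 0 < α) (hα1 : α < 1) :
    ContinuousOn (fun r : ℝ => Real.exp (-r * t) * r ^ (α - 1) / Dd α r) (Ioi 0) := by
  apply ContinuousOn.div
  · exact ((Real.continuous_exp.comp (continuous_id.neg.mul continuous_const)).continuousOn).mul
      (continuousOn_id.rpow_const (fun x hx => Or.inl (ne_of_gt hx)))
  · exact ((continuousOn_id.rpow_const (fun x hx => Or.inl (ne_of_gt hx))).add
      ((continuousOn_const.mul (continuousOn_id.rpow_const (fun x hx => Or.inl (ne_of_gt hx)))).mul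
        continuousOn_const)).add continuousOn_const
  · exact fun r hr => (D_pos α hα0 hα1 hr).ne'

lemma int_F0 (α : ℝ) (hα0 : 0 < α) (hα1 : α < 1) :
    IntegrableOn (fun r : ℝ => r ^ (α - 1) / Dd α r) (Ioi 0) := by
  have hs := sin_pos α hα0 hα1
  have hc := abs_cos_lt α hα0 hα1
  have hmeas : AEStronglyMeasurable (fun r : ℝ => r ^ (α - 1) / Dd α r)
      (volume.restrict (Ioi (0:ℝ))) := by
    have := contOn α 0 hα0 hα1
    simp only [neg_zero, mul_zero, Real.exp_zero, one_mul] at this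
    exact this.aestronglyMeasurable measurableSet_Ioi
  rw [← Ioc_union_Ioi_eq_Ioi (zero_le_one (α := ℝ))]
  apply IntegrableOn.union
  · apply Integrable.mono' (g := fun r : ℝ => (Real.sin (α*Real.pi)^2)⁻¹ * r ^ (α-1))
    · apply Integrable.const_mul
      have := intervalIntegral.intervalIntegrable_rpow' (a := 0) (b := 1) (r := α - 1)
        (by linarith)
      rwa [intervalIntegrable_iff_integrableOn_Ioc_of_le zero_le_one] at this
    · exact hmeas.mono_measure (Measure.restrict_mono Ioc_subset_Ioi_self le_rfl)
    · filter_upwards [ae_restrict_mem measurableSet_Ioc] with r hr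
      have hr0 : 0 < r := hr.1
      have hD := D_ge_sinsq α hr0
      have hDpos := D_pos α hα0 hα1 hr0
      rw [Real.norm_eq_abs, abs_of_nonneg (by positivity)]
      rw [div_le_iff₀ hDpos, mul_comm ((Real.sin (α*Real.pi)^2)⁻¹) _, mul_assoc]
      apply le_mul_of_one_le_right (Real.rpow_nonneg hr0.le _)
      calc (1:ℝ) = (Real.sin (α*Real.pi)^2)⁻¹ * Real.sin (α*Real.pi)^2 := by
            field_simp
        _ ≤ _ := by gcongr
  · apply Integrable.mono' (g := fun r : ℝ => (1 - |Real.cos (α*Real.pi)|)⁻¹ * r ^ (α-1-2*α))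
    · exact (integrableOn_Ioi_rpow_of_lt (by linarith) zero_lt_one).const_mul _
    · exact hmeas.mono_measure (Measure.restrict_mono (Ioi_subset_Ioi zero_le_one) le_rfl)
    · filter_upwards [ae_restrict_mem measurableSet_Ioi] with r hr
      have hr0 : (0:ℝ) < r := lt_trans zero_lt_one hr
      have hD := D_ge' α hα0 hα1 hr0
      have hDpos := D_pos α hα0 hα1 hr0
      have hrp : (0:ℝ) < r ^ (2*α) := Real.rpow_pos_of_pos hr0 _
      rw [Real.norm_eq_abs, abs_of_nonneg (by positivity)]
      have h1 : (0:ℝ) < 1 - |Real.cos (α*Real.pi)| := by linarith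
      have hsplit : r ^ (α-1-2*α) = r ^ (α-1) / r ^ (2*α) := Real.rpow_sub hr0 _ _
      rw [hsplit, div_le_iff₀ hDpos]
      calc r ^ (α-1) = (1 - |Real.cos (α*Real.pi)|)⁻¹ * (r ^ (α-1) / r ^ (2*α)) *
              ((1 - |Real.cos (α*Real.pi)|) * r ^ (2*α)) := by
            field_simp
        _ ≤ _ := mul_le_mul_of_nonneg_left hD (by positivity)

lemma int_Ft (α t : ℝ) (hα0 : 0 < α) (hα1 : α < 1) (ht : 0 ≤ t) :
    IntegrableOn (fun r : ℝ => Real.exp (-r * t) * r ^ (α - 1) / Dd α r) (Ioi 0) := by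
  apply Integrable.mono' (int_F0 α hα0 hα1)
    ((contOn α t hα0 hα1).aestronglyMeasurable measurableSet_Ioi)
  filter_upwards [ae_restrict_mem measurableSet_Ioi] with r hr
  have hr0 : (0:ℝ) < r := hr
  have hDpos := D_pos α hα0 hα1 hr0
  have hexp : Real.exp (-r * t) ≤ 1 := by
    rw [Real.exp_le_one_iff]; nlinarith
  rw [Real.norm_eq_abs, abs_of_nonneg (by positivity)]
  calc Real.exp (-r * t) * r ^ (α - 1) / Dd α r
      ≤ 1 * r ^ (α - 1) / Dd α r := by
        have hrp : (0:ℝ) ≤ r ^ (α - 1) := Real.rpow_nonneg hr0.le _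
        gcongr
    _ = r ^ (α - 1) / Dd α r := by rw [one_mul]

lemma int_g (α : ℝ) (hα0 : 0 < α) (hα1 : α < 1) :
    ∫ u in Ioi (0:ℝ), (u^2 + 2*u*Real.cos (α*Real.pi) + 1)⁻¹
      = α * Real.pi / Real.sin (α * Real.pi) := by
  set θ := α * Real.pi with hθ
  have hθ0 : 0 < θ := by positivity
  have hθπ : θ < Real.pi := by nlinarith [Real.pi_pos]
  have hs : 0 < Real.sin θ := Real.sin_pos_of_pos_of_lt_pi hθ0 hθπ
  have hcs := Real.sin_sq_add_cos_sq θ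
  set c := Real.cos θ
  set s := Real.sin θ
  have hderiv : ∀ u : ℝ, HasDerivAt (fun u => s⁻¹ * Real.arctan ((u + c)/s))
      ((u^2 + 2*u*c + 1)⁻¹) u := by
    intro u
    have h1 : HasDerivAt (fun u : ℝ => (u + c)/s) (1/s) u := by
      simpa using ((hasDerivAt_id u).add_const c).div_const s
    have h2 := (Real.hasDerivAt_arctan ((u + c)/s)).comp u h1
    have h3 := h2.const_mul s⁻¹
    have hX : 0 < u^2 + 2*u*c + 1 := by nlinarith [sq_nonneg (u + c)]
    have hden : 1 + ((u + c)/s)^2 = (u^2 + 2*u*c + 1)/s^2 := by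
      rw [div_pow]
      field_simp
      linear_combination hcs
    refine HasDerivAt.congr_deriv h3 (Eq.symm ?_)
    rw [hden]
    rw [one_div_div]
    field_simp
  have htend : Tendsto (fun u : ℝ => s⁻¹ * Real.arctan ((u + c)/s)) atTop
      (nhds (s⁻¹ * (Real.pi / 2))) := by
    apply Tendsto.const_mul
    apply (tendsto_nhds_of_tendsto_nhdsWithin Real.tendsto_arctan_atTop).comp
    exact (tendsto_atTop_add_const_right atTop c tendsto_id).atTop_div_const hs
  have harct : Real.arctan (c / s) = Real.pi/2 - θ := by
    rw [show c / s = Real.tan (Real.pi/2 - θ) by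
      rw [Real.tan_eq_sin_div_cos, Real.sin_pi_div_two_sub, Real.cos_pi_div_two_sub]]
    exact Real.arctan_tan (by linarith) (by linarith)
  rw [MeasureTheory.integral_Ioi_of_hasDerivAt_of_nonneg' (fun x _ => hderiv x)
    (fun x _ => inv_nonneg.2 (by nlinarith [sq_nonneg (x + c)])) htend]
  simp only [zero_add, harct]
  field_simp
  ring

lemma int_F0_eq (α : ℝ) (hα0 : 0 < α) (hα1 : α < 1) :
    ∫ r in Ioi (0:ℝ), r ^ (α - 1) / Dd α r = Real.pi / Real.sin (α * Real.pi) := by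
  have key := integral_comp_rpow_Ioi_of_pos
    (g := fun u => (u^2 + 2*u*Real.cos (α*Real.pi) + 1)⁻¹) hα0
  have hcongr : ∀ r ∈ Ioi (0:ℝ),
      (α * r ^ (α-1)) • (((r^α)^2 + 2*(r^α)*Real.cos (α*Real.pi) + 1)⁻¹)
        = α * (r ^ (α-1) / Dd α r) := by
    intro r hr
    have hr0 : (0:ℝ) < r := hr
    have h2 : (r ^ α)^2 = r ^ (2*α) := by rw [two_mul, Real.rpow_add hr0, sq]
    rw [smul_eq_mul, h2]
    unfold Dd
    ring
  rw [setIntegral_congr_fun measurableSet_Ioi hcongr] at key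
  rw [int_g α hα0 hα1, MeasureTheory.integral_const_mul] at key
  have : ∫ r in Ioi (0:ℝ), r ^ (α-1) / Dd α r
      = α⁻¹ * (α * Real.pi / Real.sin (α * Real.pi)) := by
    rw [← key]; field_simp
  rw [this]; field_simp

lemma W0_zero (α : ℝ) (hα0 : 0 < α) (hα1 : α < 1) : W0 α 0 = 1 := by
  have hs := sin_pos α hα0 hα1
  unfold W0
  have : ∀ r ∈ Ioi (0:ℝ),
      Real.exp (-r * 0) * r ^ (α - 1) /
        (r ^ (2 * α) + 2 * r ^ α * Real.cos (α * Real.pi) + 1)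
      = r ^ (α - 1) / Dd α r := by
    intro r _
    simp [Dd]
  rw [setIntegral_congr_fun measurableSet_Ioi this, int_F0_eq α hα0 hα1]
  field_simp

end W0Aux

open W0Aux in
/-- For `0 < α < 1`: `W₀` is nonincreasing on `[0,∞)`, satisfies `0 < W₀(t) ≤ 1` for
all `t ≥ 0`, and tends to `0` as `t → +∞`. -/
theorem W0_properties (α : ℝ) (hα0 : 0 < α) (hα1 : α < 1) :
    AntitoneOn (W0 α) (Set.Ici 0) ∧
      (∀ t ≥ (0 : ℝ), 0 < W0 α t ∧ W0 α t ≤ 1) ∧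
      Tendsto (W0 α) atTop (nhds 0) := by
  have hs := sin_pos α hα0 hα1
  have hπ := Real.pi_pos
  have hW0eq : ∀ t : ℝ, W0 α t = (Real.sin (α * Real.pi) / Real.pi) *
      ∫ r in Ioi (0:ℝ), Real.exp (-r * t) * r ^ (α - 1) / Dd α r := by
    intro t; rfl
  have hmono : AntitoneOn (W0 α) (Set.Ici 0) := by
    intro a ha b hb hab
    rw [hW0eq a, hW0eq b]
    apply mul_le_mul_of_nonneg_left _ (by positivity)
    apply setIntegral_mono_on (int_Ft α b hα0 hα1 (le_trans ha hab))
      (int_Ft α a hα0 hα1 ha) measurableSet_Ioi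
    intro r hr
    have hr0 : (0:ℝ) < r := hr
    have hDpos := D_pos α hα0 hα1 hr0
    have hrp : (0:ℝ) ≤ r ^ (α - 1) := Real.rpow_nonneg hr0.le _
    have hexple : Real.exp (-r * b) ≤ Real.exp (-r * a) := by
      apply Real.exp_le_exp.2; nlinarith
    gcongr
  refine ⟨hmono, fun t ht => ⟨?_, ?_⟩, ?_⟩
  · -- positivity
    rw [hW0eq t]
    apply mul_pos (by positivity)
    rw [setIntegral_pos_iff_support_of_nonneg_ae]
    · have hsub : Ioi (0:ℝ) ⊆ Function.support
          (fun r : ℝ => Real.exp (-r * t) * r ^ (α - 1) / Dd α r) := by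
        intro r hr
        have hr0 : (0:ℝ) < r := hr
        have hDpos := D_pos α hα0 hα1 hr0
        have : 0 < Real.exp (-r * t) * r ^ (α - 1) / Dd α r := by
          have := Real.rpow_pos_of_pos hr0 (α - 1)
          positivity
        exact Function.mem_support.2 this.ne'
      have : Function.support (fun r : ℝ => Real.exp (-r * t) * r ^ (α - 1) / Dd α r)
          ∩ Ioi 0 = Ioi 0 := by
        apply inter_eq_self_of_subset_right hsub
      rw [this]
      simp [Real.volume_Ioi]
    · filter_upwards [ae_restrict_mem measurableSet_Ioi] with r hr
      have hr0 : (0:ℝ) < r := hr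
      have hDpos := D_pos α hα0 hα1 hr0
      have := Real.rpow_pos_of_pos hr0 (α - 1)
      positivity
    · exact int_Ft α t hα0 hα1 ht
  · -- ≤ 1
    have := hmono (self_mem_Ici) ht ht
    rwa [W0_zero α hα0 hα1] at this
  · -- tendsto 0
    have key' : Tendsto (fun t : ℝ => ∫ r in Ioi (0:ℝ),
        Real.exp (-r * t) * r ^ (α - 1) / Dd α r) atTop
        (nhds (∫ _ in Ioi (0:ℝ), (0:ℝ))) := by
      apply MeasureTheory.tendsto_integral_filter_of_dominated_convergence
        (fun r => r ^ (α - 1) / Dd α r)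
      · filter_upwards with t
        exact (contOn α t hα0 hα1).aestronglyMeasurable measurableSet_Ioi
      · filter_upwards [Filter.eventually_ge_atTop (0:ℝ)] with t ht
        filter_upwards [ae_restrict_mem measurableSet_Ioi] with r hr
        have hr0 : (0:ℝ) < r := hr
        have hDpos := D_pos α hα0 hα1 hr0
        have hexp : Real.exp (-r * t) ≤ 1 := by
          rw [Real.exp_le_one_iff]; nlinarith
        rw [Real.norm_eq_abs, abs_of_nonneg (by positivity)]
        calc Real.exp (-r * t) * r ^ (α - 1) / Dd α r
            ≤ 1 * r ^ (α - 1) / Dd α r := by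
              have hrp : (0:ℝ) ≤ r ^ (α - 1) := Real.rpow_nonneg hr0.le _
              gcongr
          _ = r ^ (α - 1) / Dd α r := by rw [one_mul]
      · exact int_F0 α hα0 hα1
      · filter_upwards [ae_restrict_mem measurableSet_Ioi] with r hr
        have hr0 : (0:ℝ) < r := hr
        have hexp : Tendsto (fun t : ℝ => Real.exp (-r * t)) atTop (nhds 0) := by
          apply Real.tendsto_exp_atBot.comp
          exact Tendsto.const_mul_atTop_of_neg (neg_neg_of_pos hr0) tendsto_id
        have := (hexp.mul_const (r ^ (α - 1))).div_const (Dd α r)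
        simpa using this
    have key : Tendsto (fun t : ℝ => ∫ r in Ioi (0:ℝ),
        Real.exp (-r * t) * r ^ (α - 1) / Dd α r) atTop (nhds 0) := by
      simpa using key'
    have h2 := key.const_mul (Real.sin (α * Real.pi) / Real.pi)
    rw [mul_zero] at h2
    exact Tendsto.congr (fun t => (hW0eq t).symm) h2
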